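/- Let f ∈ L¹(ℝ²) ∩ L^∞(ℝ²) with f ≥ 0, and define z(x) = (1/2π) ∫_{ℝ²} f(y) log(|x−y|/(1+|y|)) dy. Then z(x)/log|x| converges, as |x| → +∞, to γ = (1/2π) ∫_{ℝ²} f. -/

import Mathlib

set_option maxHeartbeats 1000000

open MeasureTheory Filter Set Metric

noncomputable section StmtAux

abbrev E2m := EuclideanSpace ℝ (Fin 2)

def hkerm (x y : E2m) : ℝ := Real.log (max ‖x - y‖⁻¹ 1)

lemma hker_nonneg (x y : E2m) : 0 ≤ hkerm x y :=
  Real.log_nonneg (le_max_right _ _)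

lemma hker_meas (x : E2m) : Measurable (fun y => hkerm x y) := by
  apply Real.measurable_log.comp
  exact (((continuous_const.sub continuous_id).norm.measurable).inv).max measurable_const

lemma L_measm (x : E2m) :
    Measurable (fun y : E2m => Real.log (‖x - y‖ / (1 + ‖y‖))) := by
  apply Real.measurable_log.comp
  apply Measurable.div
  · exact (continuous_const.sub continuous_id).norm.measurable
  · exact (continuous_const.add continuous_norm).measurable

lemma one_add_norm_pos (y : E2m) : (0:ℝ) < 1 + ‖y‖ := by positivity

lemma ratio_nonneg (x y : E2m) : 0 ≤ ‖x - y‖ / (1 + ‖y‖) :=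
  div_nonneg (norm_nonneg _) (one_add_norm_pos y).le

lemma L_le_logm (x y : E2m) (hx : 1 ≤ ‖x‖) :
    Real.log (‖x - y‖ / (1 + ‖y‖)) ≤ Real.log ‖x‖ := by
  rcases eq_or_lt_of_le (ratio_nonneg x y) with h | h
  · rw [← h, Real.log_zero]
    exact Real.log_nonneg hx
  · rw [Real.log_le_log_iff h (lt_of_lt_of_le one_pos hx)]
    rw [div_le_iff₀ (one_add_norm_pos y)]
    nlinarith [norm_sub_le x y, norm_nonneg y]

lemma L_le_log1p (x y : E2m) :
    Real.log (‖x - y‖ / (1 + ‖y‖)) ≤ Real.log (1 + ‖x‖) := by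
  rcases eq_or_lt_of_le (ratio_nonneg x y) with h | h
  · rw [← h, Real.log_zero]
    exact Real.log_nonneg (by linarith [norm_nonneg x])
  · rw [Real.log_le_log_iff h (one_add_norm_pos x)]
    rw [div_le_iff₀ (one_add_norm_pos y)]
    nlinarith [norm_sub_le x y, norm_nonneg y, norm_nonneg x]

lemma neg_L_lem (x y : E2m) :
    -Real.log (‖x - y‖ / (1 + ‖y‖)) ≤ Real.log 2 + Real.log (1 + ‖x‖) + hkerm x y := by
  rcases eq_or_lt_of_le (norm_nonneg (x - y)) with h | hs
  · rw [← h]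
    simp only [zero_div, Real.log_zero, neg_zero]
    have h1 : (0:ℝ) ≤ Real.log 2 := Real.log_nonneg one_le_two
    have h2 : (0:ℝ) ≤ Real.log (1 + ‖x‖) := Real.log_nonneg (by linarith [norm_nonneg x])
    have h3 := hker_nonneg x y
    linarith
  · set s := ‖x - y‖ with hsdef
    have hmax1 : s⁻¹ ≤ max s⁻¹ 1 := le_max_left _ _
    have hmax2 : (1:ℝ) ≤ max s⁻¹ 1 := le_max_right _ _
    have hinv : s⁻¹ * s = 1 := inv_mul_cancel₀ hs.ne'
    have k1 : (1:ℝ) ≤ max s⁻¹ 1 * s := by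
      nlinarith [mul_le_mul_of_nonneg_right hmax1 hs.le]
    have k2 : s ≤ max s⁻¹ 1 * s := by
      nlinarith [mul_le_mul_of_nonneg_right hmax2 hs.le]
    have htri : ‖y‖ ≤ ‖x‖ + s := by
      have : y = x - (x - y) := by abel
      calc ‖y‖ = ‖x - (x - y)‖ := by rw [← this]
        _ ≤ ‖x‖ + ‖x - y‖ := norm_sub_le _ _
    have hmaxpos : (0:ℝ) < max s⁻¹ 1 := lt_of_lt_of_le one_pos hmax2
    have h1 : (1 + ‖y‖) / s ≤ 2 * ((1 + ‖x‖) * max s⁻¹ 1) := by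
      rw [div_le_iff₀ hs]
      nlinarith [norm_nonneg x, mul_le_mul_of_nonneg_left k1 (by linarith [norm_nonneg x] : (0:ℝ) ≤ 1 + ‖x‖)]
    have heq : -Real.log (s / (1 + ‖y‖)) = Real.log ((1 + ‖y‖) / s) := by
      rw [← Real.log_inv, inv_div]
    rw [heq]
    have hposl : (0:ℝ) < (1 + ‖y‖) / s := div_pos (one_add_norm_pos y) hs
    calc Real.log ((1 + ‖y‖) / s) ≤ Real.log (2 * ((1 + ‖x‖) * max s⁻¹ 1)) := by
          rw [Real.log_le_log_iff hposl (by positivity)]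
          exact h1
      _ = Real.log 2 + Real.log (1 + ‖x‖) + hkerm x y := by
          rw [Real.log_mul two_ne_zero (by positivity), Real.log_mul (by positivity) (ne_of_gt hmaxpos)]
          rw [hkerm]
          ring

lemma L_abs_lem (x y : E2m) :
    |Real.log (‖x - y‖ / (1 + ‖y‖))| ≤ Real.log 2 + Real.log (1 + ‖x‖) + hkerm x y := by
  rw [abs_le]
  constructor
  · linarith [neg_L_lem x y]
  · have h1 : (0:ℝ) ≤ Real.log 2 := Real.log_nonneg one_le_two
    linarith [L_le_log1p x y, hker_nonneg x y]

lemma L_lower_ballm (x y : E2m) (R : ℝ) (hR : 1 ≤ R) (hy : ‖y‖ ≤ R) (hx : 2 * R + 2 ≤ ‖x‖) :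
    Real.log ((‖x‖ - R) / (1 + R)) ≤ Real.log (‖x - y‖ / (1 + ‖y‖)) := by
  have h1 : (0:ℝ) < ‖x‖ - R := by linarith
  have h2 : (0:ℝ) < (‖x‖ - R) / (1 + R) := by positivity
  have h3 : ‖x‖ - R ≤ ‖x - y‖ := by
    have := norm_sub_norm_le x y
    linarith
  rw [Real.log_le_log_iff h2 (lt_of_lt_of_le h2 ?_)]
  · rw [div_le_div_iff₀ (by linarith) (one_add_norm_pos y)]
    nlinarith [norm_nonneg y]
  · rw [div_le_div_iff₀ (by linarith) (one_add_norm_pos y)]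
    nlinarith [norm_nonneg y]




def Ccstm : ENNReal := ∫⁻ t in Ioi (0:ℝ), volume (ball (0:E2m) (Real.exp (-t)))

lemma hkerm_nonneg (x y : E2m) : 0 ≤ hkerm x y := Real.log_nonneg (le_max_right _ _)

lemma hkerm_meas (x : E2m) : Measurable (fun y => hkerm x y) := by
  apply Real.measurable_log.comp
  exact (((continuous_const.sub continuous_id).norm.measurable).inv).max measurable_const

lemma hkerm_lintegral (x : E2m) :
    ∫⁻ y, ENNReal.ofReal (hkerm x y) = Ccstm := by
  rw [lintegral_eq_lintegral_meas_lt volume (ae_of_all _ (hkerm_nonneg x))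
    (hkerm_meas x).aemeasurable]
  rw [Ccstm]
  apply setLIntegral_congr_fun measurableSet_Ioi
  intro t ht
  have ht' : (0:ℝ) < t := ht
  have hset : {y : E2m | t < hkerm x y} = ball x (Real.exp (-t)) \ {x} := by
    ext y
    simp only [mem_setOf_eq, mem_diff, mem_ball, mem_singleton_iff]
    rw [hkerm, Real.lt_log_iff_exp_lt (lt_of_lt_of_le one_pos (le_max_right _ _)), lt_max_iff]
    have hexp1 : (1:ℝ) < Real.exp t := Real.one_lt_exp_iff.2 ht'
    constructor
    · rintro (h | h)
      · have hs : (0:ℝ) < ‖x - y‖ := by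
          by_contra hc
          push_neg at hc
          have : ‖x - y‖ = 0 := le_antisymm hc (norm_nonneg _)
          rw [this] at h
          simp at h
          linarith [Real.exp_pos t]
        constructor
        · rw [dist_comm, dist_eq_norm, Real.exp_neg]
          rw [lt_inv_comm₀ (Real.exp_pos t) hs] at h
          exact h
        · intro hxy
          rw [hxy] at hs
          simp at hs
      · linarith
    · rintro ⟨hd, hne⟩
      left
      have hs : (0:ℝ) < ‖x - y‖ := by
        rw [norm_pos_iff, sub_ne_zero]
        exact fun h => hne h.symm
      rw [lt_inv_comm₀ (Real.exp_pos t) hs]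
      rw [dist_comm, dist_eq_norm, Real.exp_neg] at hd
      exact hd
  beta_reduce
  rw [hset, measure_diff_null (measure_singleton x), Measure.addHaar_ball_center]

lemma Ccst_lt_top : Ccstm < ⊤ := by
  have hball : ∀ t ∈ Ioi (0:ℝ), volume (ball (0:E2m) (Real.exp (-t)))
      ≤ ENNReal.ofReal (Real.exp (-t)) * volume (ball (0:E2m) 1) := by
    intro t ht
    rw [Measure.addHaar_ball _ _ (Real.exp_pos (-t)).le]
    gcongr
    · rw [finrank_euclideanSpace_fin]
      have h1 : Real.exp (-t) ≤ 1 := Real.exp_le_one_iff.2 (by linarith [mem_Ioi.1 ht])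
      nlinarith [Real.exp_pos (-t)]
  calc Ccstm ≤ ∫⁻ t in Ioi (0:ℝ), ENNReal.ofReal (Real.exp (-t)) * volume (ball (0:E2m) 1) :=
        setLIntegral_mono (by fun_prop) hball
    _ = (∫⁻ t in Ioi (0:ℝ), ENNReal.ofReal (Real.exp (-t))) * volume (ball (0:E2m) 1) :=
        lintegral_mul_const _ (by fun_prop)
    _ < ⊤ := by
        apply ENNReal.mul_lt_top _ measure_ball_lt_top
        have hint : IntegrableOn (fun t : ℝ => Real.exp (-1 * t)) (Ioi 0) :=
          exp_neg_integrableOn_Ioi 0 one_pos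
        have := hint.2
        rw [HasFiniteIntegral] at this
        calc (∫⁻ t in Ioi (0:ℝ), ENNReal.ofReal (Real.exp (-t)))
            = ∫⁻ t in Ioi (0:ℝ), ‖Real.exp (-1 * t)‖₊ := by
              apply lintegral_congr
              intro t
              rw [← enorm_eq_nnnorm, Real.enorm_eq_ofReal (Real.exp_pos _).le, neg_one_mul]
          _ < ⊤ := this

lemma hkerm_integrable (x : E2m) : Integrable (fun y => hkerm x y) := by
  refine ⟨(hkerm_meas x).aestronglyMeasurable, ?_⟩
  rw [HasFiniteIntegral]
  calc (∫⁻ y, ‖hkerm x y‖₊) = ∫⁻ y, ENNReal.ofReal (hkerm x y) := by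
        apply lintegral_congr
        intro y
        rw [← enorm_eq_nnnorm, Real.enorm_eq_ofReal (hkerm_nonneg x y)]
    _ = Ccstm := hkerm_lintegral x
    _ < ⊤ := Ccst_lt_top

lemma hkerm_integral (x : E2m) : ∫ y, hkerm x y = Ccstm.toReal := by
  rw [integral_eq_lintegral_of_nonneg_ae (ae_of_all _ (hkerm_nonneg x))
    (hkerm_meas x).aestronglyMeasurable, hkerm_lintegral x]


lemma ev_comap {p : E2m → Prop} (A : ℝ) (hp : ∀ x : E2m, A ≤ ‖x‖ → p x) :
    ∀ᶠ x in comap norm atTop, p x :=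
  eventually_comap.2 ((eventually_ge_atTop A).mono fun b hb x hx => hp x (by rw [hx]; exact hb))

variable (x : E2m)

section withf
variable (f : E2m → ℝ) (hf_int : Integrable f) (hf_nonneg : ∀ y, 0 ≤ f y)
  (M : ℝ) (hf_bdd : ∀ y, f y ≤ M)

include hf_int hf_nonneg hf_bdd in
lemma int_f_mul_hker : Integrable (fun y => f y * hkerm x y) := by
  apply Integrable.mono' ((hkerm_integrable x).const_mul M)
    (hf_int.1.mul (hkerm_meas x).aestronglyMeasurable)
  apply ae_of_all
  intro y
  simp only [Pi.mul_apply]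
  rw [Real.norm_eq_abs, abs_of_nonneg (mul_nonneg (hf_nonneg y) (hkerm_nonneg x y))]
  exact mul_le_mul_of_nonneg_right (hf_bdd y) (hkerm_nonneg x y)

include hf_int hf_nonneg hf_bdd in
lemma integral_f_mul_hker_le : ∫ y, f y * hkerm x y ≤ M * Ccstm.toReal := by
  calc ∫ y, f y * hkerm x y ≤ ∫ y, M * hkerm x y := by
        apply integral_mono (int_f_mul_hker x f hf_int hf_nonneg M hf_bdd)
          ((hkerm_integrable x).const_mul M)
        intro y
        exact mul_le_mul_of_nonneg_right (hf_bdd y) (hkerm_nonneg x y)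
    _ = M * Ccstm.toReal := by rw [integral_const_mul, hkerm_integral x]

include hf_int hf_nonneg hf_bdd in
lemma integrable_f_mul_L :
    Integrable (fun y => f y * Real.log (‖x - y‖ / (1 + ‖y‖))) := by
  apply Integrable.mono'
    (g := fun y => f y * (Real.log 2 + Real.log (1 + ‖x‖)) + M * hkerm x y)
    ((hf_int.mul_const _).add ((hkerm_integrable x).const_mul M))
    (hf_int.1.mul (L_measm x).aestronglyMeasurable)
  apply ae_of_all
  intro y
  simp only [Pi.mul_apply]
  rw [Real.norm_eq_abs, abs_mul, abs_of_nonneg (hf_nonneg y)]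
  nlinarith [mul_le_mul_of_nonneg_left (L_abs_lem x y) (hf_nonneg y),
    mul_le_mul_of_nonneg_right (hf_bdd y) (hkerm_nonneg x y)]

end withf

theorem stmt_3 (f : EuclideanSpace ℝ (Fin 2) → ℝ)
    (hf_int : Integrable f) (hf_nonneg : ∀ y, 0 ≤ f y)
    (M : ℝ) (hf_bdd : ∀ y, f y ≤ M) :
    Tendsto
      (fun x : EuclideanSpace ℝ (Fin 2) =>
        ((1 / (2 * Real.pi)) * ∫ y, f y * Real.log (‖x - y‖ / (1 + ‖y‖))) /
          Real.log ‖x‖)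
      (Filter.comap norm Filter.atTop)
      (nhds ((1 / (2 * Real.pi)) * ∫ y, f y)) := by
  have hI0 : 0 ≤ ∫ y, f y := integral_nonneg hf_nonneg
  have hM0 : 0 ≤ M := le_trans (hf_nonneg 0) (hf_bdd 0)
  set I := ∫ y, f y with hIdef
  have key : Tendsto
      (fun x : E2m => (∫ y, f y * Real.log (‖x - y‖ / (1 + ‖y‖))) / Real.log ‖x‖)
      (comap norm atTop) (nhds I) := by
    rw [tendsto_order]
    constructor
    · -- lower bound branch
      intro a ha
      set η := (I - a) / 4 with hηdef
      have hη0 : 0 < η := by rw [hηdef]; linarith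
      -- choose R
      obtain ⟨R, hR1, hRmass⟩ : ∃ R : ℝ, 1 ≤ R ∧
          I - η/2 ≤ ∫ y in closedBall (0:E2m) R, f y := by
        have hmono : Monotone (fun n : ℕ => closedBall (0:E2m) (n:ℝ)) := fun m n hmn =>
          closedBall_subset_closedBall (by exact_mod_cast hmn)
        have hunion : ⋃ n : ℕ, closedBall (0:E2m) (n:ℝ) = univ := by
          ext z
          simp only [mem_iUnion, mem_closedBall, mem_univ, iff_true]
          obtain ⟨n, hn⟩ := exists_nat_ge (dist z 0)
          exact ⟨n, hn⟩
        have ht := tendsto_setIntegral_of_monotone (fun _ => measurableSet_closedBall)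
          hmono (by rw [hunion]; exact hf_int.integrableOn)
        rw [hunion, setIntegral_univ] at ht
        have h1 := ht.eventually (eventually_ge_nhds (show I - η/2 < I by linarith))
        obtain ⟨n, hn⟩ := (h1.and (eventually_ge_atTop 1)).exists
        exact ⟨(n:ℝ), by exact_mod_cast hn.2, hn.1⟩
      set B := closedBall (0:E2m) R with hBdef
      have hRtail : ∫ y in Bᶜ, f y ≤ η/2 := by
        have := integral_add_compl (measurableSet_closedBall (x := (0:E2m)) (ε := R)) hf_int
        rw [← hIdef] at this
        linarith
      set cR := Real.log 2 + Real.log (1 + R) with hcRdef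
      have hlog2 : (0:ℝ) ≤ Real.log 2 := Real.log_nonneg one_le_two
      have hlog2le : Real.log 2 ≤ 1 := by
        have := Real.log_le_sub_one_of_pos (show (0:ℝ) < 2 by norm_num)
        linarith
      have hcR0 : 0 ≤ cR := by
        have : (0:ℝ) ≤ Real.log (1 + R) := Real.log_nonneg (by linarith)
        rw [hcRdef]; linarith
      set C0 := cR * I + M * Ccstm.toReal with hC0def
      have hCcst0 : 0 ≤ M * Ccstm.toReal := mul_nonneg hM0 ENNReal.toReal_nonneg
      have hC00 : 0 ≤ C0 := by
        rw [hC0def]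
        have := mul_nonneg hcR0 hI0
        linarith
      apply ev_comap (max (2*R+2) (Real.exp (2 + C0/η)))
      intro x hx
      have hx1 : 2*R+2 ≤ ‖x‖ := le_trans (le_max_left _ _) hx
      have hx2 : Real.exp (2 + C0/η) ≤ ‖x‖ := le_trans (le_max_right _ _) hx
      have hxpos : (0:ℝ) < ‖x‖ := lt_of_lt_of_le (Real.exp_pos _) hx2
      set s := Real.log ‖x‖ with hsdef
      have hs : 2 + C0/η ≤ s := (Real.le_log_iff_exp_le hxpos).2 hx2
      have hs2 : 2 ≤ s := by
        have : 0 ≤ C0/η := div_nonneg hC00 hη0.le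
        linarith
      have hs0 : 0 < s := by linarith
      have hintL := integrable_f_mul_L x f hf_int hf_nonneg M hf_bdd
      have hfh := int_f_mul_hker x f hf_int hf_nonneg M hf_bdd
      set ℓ := Real.log ((‖x‖ - R) / (1 + R)) with hℓdef
      have hxR : (0:ℝ) < ‖x‖ - R := by linarith
      have hℓ0 : 0 ≤ ℓ := by
        apply Real.log_nonneg
        rw [le_div_iff₀ (by linarith : (0:ℝ) < 1 + R)]
        linarith
      have hℓ2 : ℓ ≤ s := by
        rw [hℓdef, hsdef, Real.log_le_log_iff (by positivity) hxpos, div_le_iff₀ (by linarith : (0:ℝ) < 1 + R)]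
        nlinarith
      have hℓ1 : s - cR ≤ ℓ := by
        have e1 : ℓ = Real.log (‖x‖ - R) - Real.log (1 + R) := by
          rw [hℓdef, Real.log_div hxR.ne' (by linarith : (1:ℝ) + R ≠ 0)]
        have e2 : Real.log (‖x‖/2) ≤ Real.log (‖x‖ - R) := by
          rw [Real.log_le_log_iff (by positivity) hxR]
          linarith
        have e3 : Real.log (‖x‖/2) = s - Real.log 2 := by
          rw [hsdef, Real.log_div hxpos.ne' two_ne_zero]
        rw [e1, hcRdef]
        linarith
      set c₂ := Real.log 2 + Real.log (1 + ‖x‖) with hc₂def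
      have hc₂0 : 0 ≤ c₂ := by
        have : (0:ℝ) ≤ Real.log (1 + ‖x‖) := Real.log_nonneg (by linarith)
        rw [hc₂def]; linarith
      have hc₂le : c₂ ≤ 2*s := by
        have e1 : Real.log (1 + ‖x‖) ≤ Real.log 2 + s := by
          have h2x : 1 + ‖x‖ ≤ 2 * ‖x‖ := by linarith
          have := Real.log_le_log (by positivity) h2x
          rwa [Real.log_mul two_ne_zero hxpos.ne', ← hsdef] at this
        rw [hc₂def]
        linarith
      -- lower bound on ball part
      have hB : ℓ * ∫ y in B, f y ≤ ∫ y in B, f y * Real.log (‖x - y‖ / (1 + ‖y‖)) := by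
        have h1 : ∫ y in B, f y * ℓ ≤ ∫ y in B, f y * Real.log (‖x - y‖ / (1 + ‖y‖)) := by
          apply setIntegral_mono_on (hf_int.mul_const ℓ).integrableOn hintL.integrableOn
            measurableSet_closedBall
          intro y hy
          apply mul_le_mul_of_nonneg_left _ (hf_nonneg y)
          exact L_lower_ballm x y R hR1 (by simpa [hBdef, mem_closedBall, dist_zero_right] using hy) hx1
        rw [integral_mul_const] at h1
        linarith [h1]
      -- lower bound on complement part
      have hBc : -(η/2 * c₂ + M * Ccstm.toReal) ≤
          ∫ y in Bᶜ, f y * Real.log (‖x - y‖ / (1 + ‖y‖)) := by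
        have hptc : ∀ y ∈ Bᶜ, -(f y * c₂ + f y * hkerm x y) ≤
            f y * Real.log (‖x - y‖ / (1 + ‖y‖)) := by
          intro y _
          have := mul_le_mul_of_nonneg_left (neg_L_lem x y) (hf_nonneg y)
          rw [hc₂def]
          nlinarith
        have h2 : ∫ y in Bᶜ, -(f y * c₂ + f y * hkerm x y) ≤
            ∫ y in Bᶜ, f y * Real.log (‖x - y‖ / (1 + ‖y‖)) :=
          setIntegral_mono_on ((hf_int.mul_const c₂).add hfh).neg.integrableOn
            hintL.integrableOn measurableSet_closedBall.compl hptc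
        rw [integral_neg, integral_add ((hf_int.mul_const c₂).integrableOn) hfh.integrableOn,
          integral_mul_const] at h2
        have h3 : (∫ y in Bᶜ, f y) * c₂ ≤ η/2 * c₂ := mul_le_mul_of_nonneg_right hRtail hc₂0
        have h4 : ∫ y in Bᶜ, f y * hkerm x y ≤ M * Ccstm.toReal := by
          calc ∫ y in Bᶜ, f y * hkerm x y ≤ ∫ y, f y * hkerm x y :=
                setIntegral_le_integral hfh
                  (ae_of_all _ fun y => mul_nonneg (hf_nonneg y) (hkerm_nonneg x y))
            _ ≤ M * Ccstm.toReal := integral_f_mul_hker_le x f hf_int hf_nonneg M hf_bdd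
        linarith
      -- combine
      have hsplit := integral_add_compl (measurableSet_closedBall (x := (0:E2m)) (ε := R)) hintL
      have step2 : s*(I - η/2) - cR*I ≤ ℓ*(I - η/2) := by
        rcases le_or_gt 0 (I - η/2) with h | h
        · have := mul_le_mul_of_nonneg_right hℓ1 h
          nlinarith [mul_nonneg hcR0 hη0.le]
        · have := mul_le_mul_of_nonpos_right hℓ2 h.le
          nlinarith [mul_nonneg hcR0 hI0]
      have step1 : ℓ*(I - η/2) ≤ ℓ * ∫ y in B, f y :=
        mul_le_mul_of_nonneg_left hRmass hℓ0
      have hc2s : η/2 * c₂ ≤ η * s := by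
        have := mul_le_mul_of_nonneg_left hc₂le (by linarith : (0:ℝ) ≤ η/2)
        linarith
      have hZlow : s * (I - (3/2)*η) - C0 ≤
          ∫ y, f y * Real.log (‖x - y‖ / (1 + ‖y‖)) := by
        rw [hC0def]
        have hring : s*(I-(3/2)*η) = s*(I-η/2) - η*s := by ring
        linarith [hB, hBc, hsplit, step1, step2, hc2s]
      have hC0s : C0 ≤ η * (s - 2) := by
        have h5 : C0/η ≤ s - 2 := by linarith
        calc C0 = (C0/η) * η := by field_simp
          _ ≤ (s-2) * η := mul_le_mul_of_nonneg_right h5 hη0.le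
          _ = η * (s-2) := mul_comm _ _
      rw [lt_div_iff₀ hs0]
      have haI : a = I - 4*η := by rw [hηdef]; ring
      nlinarith [mul_pos hη0 hs0, hZlow, hC0s, hs2, hη0]
    · -- upper bound branch
      intro a ha
      apply ev_comap 2
      intro x hx
      have hx1 : (1:ℝ) ≤ ‖x‖ := by linarith
      have hlog : 0 < Real.log ‖x‖ := Real.log_pos (by linarith)
      have hintL := integrable_f_mul_L x f hf_int hf_nonneg M hf_bdd
      have hZ : (∫ y, f y * Real.log (‖x - y‖ / (1 + ‖y‖))) ≤ I * Real.log ‖x‖ := by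
        calc (∫ y, f y * Real.log (‖x - y‖ / (1 + ‖y‖)))
            ≤ ∫ y, f y * Real.log ‖x‖ := by
              apply integral_mono hintL (hf_int.mul_const _)
              intro y
              exact mul_le_mul_of_nonneg_left (L_le_logm x y hx1) (hf_nonneg y)
          _ = I * Real.log ‖x‖ := by rw [integral_mul_const]
      have := (div_le_iff₀ hlog).2 hZ
      linarith
  have h2 := key.const_mul (1 / (2 * Real.pi))
  simpa [mul_div_assoc] using h2

end StmtAux
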